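/- arXiv:1607.04045 — 4 statements merged into one kernel-verified Lean document; each statement's English description precedes it below -/
import Mathlib

section
/- Let H > 0 and let (Z_t)_{t ≥ 0} be an H-self-similar stochastic process with continuous paths such that E[ sup_{t ∈ [0,1]} |Z_t| ] < ∞. Then lim_{n → ∞} n^{−H} E[ max_{k = 1, …, n} Z_k ] = E[ sup_{t ∈ [0,1]} Z_t ]. -/
open MeasureTheory ProbabilityTheory Filter Topology
open scoped ENNReal NNReal

private lemma measurable_ciSup_fin {α : Type*} [MeasurableSpace α] {n : ℕ}
    {g : Fin n → α → ℝ} (hg : ∀ k, Measurable (g k)) :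
    Measurable (fun a => ⨆ k, g k a) := by
  rcases Nat.eq_zero_or_pos n with h | h
  · subst h
    have : (fun a : α => ⨆ k : Fin 0, g k a) = fun _ => 0 := by
      funext a
      rw [iSup, Set.range_eq_empty, Real.sSup_empty]
    rw [this]; exact measurable_const
  · have hne : Nonempty (Fin n) := Fin.pos_iff_nonempty.mp h
    have key : (fun a => ⨆ k, g k a)
        = (Finset.univ.sup' Finset.univ_nonempty g : α → ℝ) := by
      funext a
      rw [Finset.sup'_apply, Finset.sup'_univ_eq_ciSup]
    rw [key]
    exact Finset.measurable_sup' _ (fun k _ => hg k)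

private lemma grid_mem_Icc {n : ℕ} (hn : 1 ≤ n) (k : Fin n) :
    (((k : ℕ) + 1 : ℝ≥0) / n) ∈ Set.Icc (0 : ℝ≥0) 1 := by
  constructor
  · exact zero_le
  · rw [div_le_one (by positivity)]
    have : (k : ℕ) + 1 ≤ n := k.isLt
    exact_mod_cast this

private lemma grid_sup_tendsto {f : ℝ≥0 → ℝ} (hf : Continuous f) :
    Tendsto (fun n : ℕ => ⨆ k : Fin n, f (((k : ℕ) + 1 : ℝ≥0) / n))
      atTop (𝓝 (⨆ t : Set.Icc (0 : ℝ≥0) 1, f t)) := by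
  obtain ⟨t₀, ht₀, hmax⟩ :=
    isCompact_Icc.exists_isMaxOn (⟨0, by simp⟩ : (Set.Icc (0 : ℝ≥0) 1).Nonempty)
      hf.continuousOn
  have hbdd : BddAbove (Set.range fun t : Set.Icc (0 : ℝ≥0) 1 => f t) :=
    ⟨f t₀, by rintro x ⟨t, rfl⟩; exact hmax t.2⟩
  have hM : (⨆ t : Set.Icc (0 : ℝ≥0) 1, f t) = f t₀ := by
    refine le_antisymm (ciSup_le fun t => hmax t.2) (le_ciSup hbdd ⟨t₀, ht₀⟩)
  rw [hM]
  set m : ℕ → ℕ := fun n => max 1 ⌈(t₀ * n : ℝ≥0)⌉₊ with hm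
  have hm_le : ∀ n : ℕ, 1 ≤ n → m n ≤ n := by
    intro n hn
    refine max_le hn (Nat.ceil_le.mpr ?_)
    calc t₀ * n ≤ 1 * n := by gcongr; exact ht₀.2
    _ = (n : ℝ≥0) := one_mul _
  -- the grid point (m n)/n tends to t₀
  have hgrid_real : Tendsto (fun n : ℕ => (m n : ℝ) / n) atTop (𝓝 (t₀ : ℝ)) := by
    have hle : ∀ᶠ n : ℕ in atTop, (t₀ : ℝ) ≤ (m n : ℝ) / n := by
      filter_upwards [eventually_ge_atTop 1] with n hn
      have hn' : (0 : ℝ) < n := by exact_mod_cast hn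
      rw [le_div_iff₀ hn']
      have h1 : (t₀ * n : ℝ≥0) ≤ (m n : ℝ≥0) := by
        calc (t₀ * n : ℝ≥0) ≤ (⌈(t₀ * n : ℝ≥0)⌉₊ : ℝ≥0) := Nat.le_ceil _
        _ ≤ (m n : ℝ≥0) := by exact_mod_cast le_max_right 1 ⌈(t₀ * n : ℝ≥0)⌉₊
      have := NNReal.coe_le_coe.mpr h1
      push_cast at this ⊢
      linarith
    have hge : ∀ᶠ n : ℕ in atTop, (m n : ℝ) / n ≤ (t₀ : ℝ) + 1 / n := by
      filter_upwards [eventually_ge_atTop 1] with n hn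
      have hn' : (0 : ℝ) < n := by exact_mod_cast hn
      rw [div_le_iff₀ hn']
      have hc : (⌈(t₀ * n : ℝ≥0)⌉₊ : ℝ≥0) < (t₀ * n : ℝ≥0) + 1 :=
        Nat.ceil_lt_add_one zero_le
      have hc' : (⌈(t₀ * n : ℝ≥0)⌉₊ : ℝ) ≤ (t₀ : ℝ) * n + 1 := by
        have := NNReal.coe_le_coe.mpr hc.le
        push_cast at this ⊢
        linarith
      have h2 : (m n : ℝ) ≤ (t₀ : ℝ) * n + 1 := by
        rw [hm]
        push_cast [Nat.cast_max]
        refine max_le ?_ hc'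
        have h0 : (0 : ℝ) ≤ (t₀ : ℝ) * n := by positivity
        linarith
      have : ((t₀ : ℝ) + 1 / n) * n = (t₀ : ℝ) * n + 1 := by field_simp
      linarith
    have hlim : Tendsto (fun n : ℕ => (t₀ : ℝ) + 1 / n) atTop (𝓝 ((t₀ : ℝ) + 0)) :=
      tendsto_const_nhds.add tendsto_one_div_atTop_nhds_zero_nat
    rw [add_zero] at hlim
    exact tendsto_of_tendsto_of_tendsto_of_le_of_le' tendsto_const_nhds hlim hle hge
  have hgrid_tendsto : Tendsto (fun n : ℕ => ((m n : ℝ≥0) / n : ℝ≥0)) atTop (𝓝 t₀) := by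
    rw [← NNReal.tendsto_coe]
    refine hgrid_real.congr fun n => ?_
    rw [NNReal.coe_div]
    push_cast
    ring
  have hfm : Tendsto (fun n : ℕ => f ((m n : ℝ≥0) / n)) atTop (𝓝 (f t₀)) :=
    (hf.tendsto t₀).comp hgrid_tendsto
  refine tendsto_of_tendsto_of_tendsto_of_le_of_le' hfm tendsto_const_nhds ?_ ?_
  · -- f((m n)/n) ≤ sup over grid
    filter_upwards [eventually_ge_atTop 1] with n hn
    have hm1 : 1 ≤ m n := le_max_left _ _
    have hmn : m n ≤ n := hm_le n hn
    have hk : m n - 1 < n := by omega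
    have hpt : ((((⟨m n - 1, hk⟩ : Fin n) : ℕ) + 1 : ℝ≥0) / n) = ((m n : ℝ≥0) / n) := by
      congr 1
      have : (m n - 1) + 1 = m n := by omega
      exact_mod_cast congrArg (Nat.cast (R := ℝ≥0)) this
    have hbdd' : BddAbove (Set.range fun k : Fin n => f (((k : ℕ) + 1 : ℝ≥0) / n)) :=
      (Set.finite_range _).bddAbove
    calc f ((m n : ℝ≥0) / n) = f ((((⟨m n - 1, hk⟩ : Fin n) : ℕ) + 1 : ℝ≥0) / n) := by rw [hpt]
    _ ≤ ⨆ k : Fin n, f (((k : ℕ) + 1 : ℝ≥0) / n) := le_ciSup hbdd' _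
  · -- sup over grid ≤ f t₀
    filter_upwards [eventually_ge_atTop 1] with n hn
    have : Nonempty (Fin n) := Fin.pos_iff_nonempty.mp hn
    exact ciSup_le fun k => hmax (grid_mem_Icc hn k)

/-- For an `H`-self-similar process `Z` with continuous paths and integrable running
supremum on `[0,1]`, the normalized expected discrete maxima converge:
`lim_{n → ∞} n^{-H} E[max_{k=1,…,n} Z_k] = E[sup_{t ∈ [0,1]} Z_t]`. -/
theorem selfSimilar_expected_max_limit
    {Ω : Type*} [MeasureSpace Ω] [IsProbabilityMeasure (ℙ : Measure Ω)]
    {H : ℝ} (hH : 0 < H) (Z : Ω → ℝ≥0 → ℝ)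
    (hmeas : ∀ t : ℝ≥0, Measurable fun ω => Z ω t)
    (hcont : ∀ ω, Continuous (Z ω))
    (hss : ∀ c : ℝ≥0, 0 < c →
      Measure.map (fun ω => fun t => Z ω (c * t)) ℙ
        = Measure.map (fun ω => fun t => (c : ℝ) ^ H * Z ω t) (ℙ : Measure Ω))
    (hint : Integrable (fun ω => ⨆ t : Set.Icc (0 : ℝ≥0) 1, |Z ω t|) ℙ) :
    Tendsto
      (fun n : ℕ => (n : ℝ) ^ (-H) * ∫ ω, (⨆ k : Fin n, Z ω ((k : ℕ) + 1 : ℝ≥0)) ∂ℙ)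
      atTop (𝓝 (∫ ω, (⨆ t : Set.Icc (0 : ℝ≥0) 1, Z ω t) ∂(ℙ : Measure Ω))) := by
  -- scaling identity
  have scaling : ∀ n : ℕ, 1 ≤ n →
      (∫ ω, (⨆ k : Fin n, Z ω ((k : ℕ) + 1 : ℝ≥0)) ∂ℙ)
        = (n : ℝ) ^ H * ∫ ω, (⨆ k : Fin n, Z ω (((k : ℕ) + 1 : ℝ≥0) / n)) ∂ℙ := by
    intro n hn
    have hne : Nonempty (Fin n) := Fin.pos_iff_nonempty.mp hn
    have hn0 : ((n : ℝ≥0) : ℝ≥0) ≠ 0 := by exact_mod_cast Nat.one_le_iff_ne_zero.mp hn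
    set F : (ℝ≥0 → ℝ) → ℝ := fun f => ⨆ k : Fin n, f (((k : ℕ) + 1 : ℝ≥0) / n) with hF
    have hFmeas : Measurable F :=
      measurable_ciSup_fin (fun k => measurable_pi_apply _)
    have h1 : Measurable (fun ω => fun t => Z ω ((n : ℝ≥0) * t)) :=
      measurable_pi_lambda _ (fun t => hmeas _)
    have h2 : Measurable (fun ω => fun t => ((n : ℝ≥0) : ℝ) ^ H * Z ω t) :=
      measurable_pi_lambda _ (fun t => (hmeas t).const_mul _)
    have key : ∫ ω, F (fun t => Z ω ((n : ℝ≥0) * t)) ∂ℙ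
        = ∫ ω, F (fun t => ((n : ℝ≥0) : ℝ) ^ H * Z ω t) ∂ℙ := by
      rw [← integral_map h1.aemeasurable hFmeas.aestronglyMeasurable,
        hss (n : ℝ≥0) (by exact_mod_cast hn),
        integral_map h2.aemeasurable hFmeas.aestronglyMeasurable]
    have hL : ∀ ω, F (fun t => Z ω ((n : ℝ≥0) * t)) = ⨆ k : Fin n, Z ω ((k : ℕ) + 1 : ℝ≥0) := by
      intro ω
      simp only [hF]
      congr 1
      funext k
      congr 1
      rw [mul_comm, div_mul_cancel₀ _ hn0]
    have hR : ∀ ω, F (fun t => ((n : ℝ≥0) : ℝ) ^ H * Z ω t)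
        = ((n : ℝ≥0) : ℝ) ^ H * ⨆ k : Fin n, Z ω (((k : ℕ) + 1 : ℝ≥0) / n) := by
      intro ω
      simp only [hF]
      rw [Real.mul_iSup_of_nonneg (Real.rpow_nonneg (by positivity) _)]
    calc (∫ ω, (⨆ k : Fin n, Z ω ((k : ℕ) + 1 : ℝ≥0)) ∂ℙ)
        = ∫ ω, F (fun t => Z ω ((n : ℝ≥0) * t)) ∂ℙ := by
          congr 1; funext ω; rw [hL]
    _ = ∫ ω, F (fun t => ((n : ℝ≥0) : ℝ) ^ H * Z ω t) ∂ℙ := key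
    _ = ∫ ω, ((n : ℝ≥0) : ℝ) ^ H * ⨆ k : Fin n, Z ω (((k : ℕ) + 1 : ℝ≥0) / n) ∂ℙ := by
          congr 1; funext ω; rw [hR]
    _ = (n : ℝ) ^ H * ∫ ω, (⨆ k : Fin n, Z ω (((k : ℕ) + 1 : ℝ≥0) / n)) ∂ℙ := by
          rw [integral_const_mul]; norm_num
  -- eventual equality after normalization
  have key : ∀ᶠ n : ℕ in atTop,
      (∫ ω, (⨆ k : Fin n, Z ω (((k : ℕ) + 1 : ℝ≥0) / n)) ∂ℙ)
        = (n : ℝ) ^ (-H) * ∫ ω, (⨆ k : Fin n, Z ω ((k : ℕ) + 1 : ℝ≥0)) ∂ℙ := by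
    filter_upwards [eventually_ge_atTop 1] with n hn
    have hn' : (0 : ℝ) < n := by exact_mod_cast hn
    rw [scaling n hn, ← mul_assoc, ← Real.rpow_add hn', neg_add_cancel, Real.rpow_zero, one_mul]
  refine Tendsto.congr' key ?_
  -- dominated convergence
  refine tendsto_integral_filter_of_dominated_convergence
    (fun ω => ⨆ t : Set.Icc (0 : ℝ≥0) 1, |Z ω t|) ?_ ?_ hint ?_
  · exact Eventually.of_forall fun n =>
      (measurable_ciSup_fin (fun k => hmeas _)).aestronglyMeasurable
  · filter_upwards [eventually_ge_atTop 1] with n hn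
    refine Eventually.of_forall fun ω => ?_
    haveI : NeZero n := ⟨Nat.one_le_iff_ne_zero.mp hn⟩
    have hbddI : BddAbove (Set.range fun t : Set.Icc (0 : ℝ≥0) 1 => |Z ω t|) := by
      have hr : (Set.range fun t : Set.Icc (0 : ℝ≥0) 1 => |Z ω t|)
          = (fun u => |Z ω u|) '' Set.Icc (0 : ℝ≥0) 1 := (Set.image_eq_range (fun u => |Z ω u|) (Set.Icc (0 : ℝ≥0) 1)).symm
      rw [hr]
      exact (isCompact_Icc.image_of_continuousOn ((hcont ω).abs.continuousOn)).bddAbove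
    have hub : ∀ t : Set.Icc (0 : ℝ≥0) 1, |Z ω t| ≤ ⨆ s : Set.Icc (0 : ℝ≥0) 1, |Z ω s| :=
      fun t => le_ciSup hbddI t
    rw [Real.norm_eq_abs, abs_le]
    constructor
    · refine neg_le.mp ?_
      have hpt := hub ⟨(((0 : Fin n) : ℕ) + 1 : ℝ≥0) / n, grid_mem_Icc hn 0⟩
      have hbdd' : BddAbove (Set.range fun k : Fin n => Z ω (((k : ℕ) + 1 : ℝ≥0) / n)) :=
        (Set.finite_range _).bddAbove
      calc -(⨆ k : Fin n, Z ω (((k : ℕ) + 1 : ℝ≥0) / n))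
          ≤ -(Z ω ((((0 : Fin n) : ℕ) + 1 : ℝ≥0) / n)) := by
            exact neg_le_neg (le_ciSup hbdd' (0 : Fin n))
      _ ≤ |Z ω ((((0 : Fin n) : ℕ) + 1 : ℝ≥0) / n)| := neg_le_abs _
      _ ≤ ⨆ s : Set.Icc (0 : ℝ≥0) 1, |Z ω s| := hpt
    · exact ciSup_le fun k =>
        (le_abs_self _).trans (hub ⟨(((k : ℕ) + 1 : ℝ≥0) / n), grid_mem_Icc hn k⟩)
  · exact Eventually.of_forall fun ω => grid_sup_tendsto (hcont ω)
end

section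
/- Let H > 0 and let (Z_t)_{t ≥ 0} be an H-self-similar stochastic process with continuous paths, stationary increments, and Z₀ = 0. Then for every δ ∈ (0, 1] and every N ∈ ℕ: P( sup_{t ∈ [0, Nδ]} Z_t ≤ 1 ) ≥ P( max_{k = 1, …, N} Z_k < 0 ) − N · P( sup_{t ∈ (0, 1]} Z_t > δ^{−H} ). -/
open MeasureTheory ProbabilityTheory
open scoped ENNReal NNReal

lemma key_aux {f : ℝ≥0 → ℝ} (hf : Continuous f) {c : ℝ} {s : ℝ≥0} (hs : 0 < s)
    (hfs : c < f s) :
    ∃ q : ℚ, 0 < (q : ℝ) ∧ (q : ℝ) ≤ (s : ℝ) ∧ c < f (Real.toNNReal q) := by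
  have hU : IsOpen (f ⁻¹' Set.Ioi c) := isOpen_Ioi.preimage hf
  rcases Metric.isOpen_iff.1 hU s hfs with ⟨ε, hε, hball⟩
  obtain ⟨q, hq1, hq2⟩ := exists_rat_btwn
    (show max ((s : ℝ) - ε) 0 < (s : ℝ) from
      max_lt (by linarith) (by exact_mod_cast hs))
  have hq0 : (0 : ℝ) < q := lt_of_le_of_lt (le_max_right _ _) hq1
  refine ⟨q, hq0, le_of_lt hq2, ?_⟩
  have : (Real.toNNReal q) ∈ Metric.ball s ε := by
    rw [Metric.mem_ball, NNReal.dist_eq, Real.coe_toNNReal q hq0.le]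
    rw [abs_sub_lt_iff]
    constructor
    · linarith
    · have : (s : ℝ) - ε ≤ max ((s : ℝ) - ε) 0 := le_max_left _ _
      linarith
  exact hball this

lemma cont_le_of_rat {f : ℝ≥0 → ℝ} (hf : Continuous f) {y : ℝ} {M : ℝ≥0}
    (h : ∀ q : ℚ, 0 ≤ (q : ℝ) → (q : ℝ) ≤ (M : ℝ) → f (Real.toNNReal q) ≤ y) :
    ∀ s : ℝ≥0, s ≤ M → f s ≤ y := by
  intro s hs
  by_contra hcon
  push_neg at hcon
  rcases eq_or_lt_of_le (show (0 : ℝ≥0) ≤ s from zero_le) with h0 | h0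
  · have := h 0 (by norm_num) (by exact_mod_cast M.coe_nonneg)
    simp only [Rat.cast_zero, Real.toNNReal_zero] at this
    rw [← h0] at hcon
    exact absurd this (not_le.2 hcon)
  · obtain ⟨q, hq0, hqs, hqc⟩ := key_aux hf h0 hcon
    have hqM : (q : ℝ) ≤ (M : ℝ) := hqs.trans (by exact_mod_cast hs)
    exact absurd (h q hq0.le hqM) (not_le.2 hqc)

/-- For an `H`-self-similar process `Z` with continuous paths, stationary increments and
`Z₀ = 0`, for every `δ ∈ (0,1]` and `N ∈ ℕ`:
`ℙ(sup_{t ∈ [0, Nδ]} Z_t ≤ 1) ≥ ℙ(max_{k=1,…,N} Z_k < 0) - N · ℙ(sup_{t ∈ (0,1]} Z_t > δ^{-H})`. -/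
theorem persistence_discretization_lower_bound
    {Ω : Type*} [MeasureSpace Ω] [IsProbabilityMeasure (ℙ : Measure Ω)]
    {H : ℝ} (hH : 0 < H) (Z : Ω → ℝ≥0 → ℝ)
    (hmeas : ∀ t : ℝ≥0, Measurable fun ω => Z ω t)
    (hcont : ∀ ω, Continuous (Z ω))
    (hZ0 : ∀ ω, Z ω 0 = 0)
    (hss : ∀ c : ℝ≥0, 0 < c →
      Measure.map (fun ω => fun t => Z ω (c * t)) ℙ
        = Measure.map (fun ω => fun t => (c : ℝ) ^ H * Z ω t) (ℙ : Measure Ω))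
    (hstat : ∀ s : ℝ≥0,
      Measure.map (fun ω => fun t => Z ω (t + s) - Z ω s) ℙ
        = Measure.map (fun ω => fun t => Z ω t) (ℙ : Measure Ω))
    (δ : ℝ≥0) (hδ : 0 < δ) (hδ1 : δ ≤ 1) (N : ℕ) :
    ℙ {ω | ∀ k : ℕ, 1 ≤ k → k ≤ N → Z ω (k : ℝ≥0) < 0}
        - (N : ℝ≥0∞) * ℙ {ω | ∃ t : ℝ≥0, 0 < t ∧ t ≤ 1 ∧ (δ : ℝ) ^ (-H) < Z ω t}
      ≤ ℙ {ω | ∀ t : ℝ≥0, t ≤ (N : ℝ≥0) * δ → Z ω t ≤ 1} := by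
  set c : ℝ := (δ : ℝ) ^ (-H) with hc_def
  have hδR : (0 : ℝ) < (δ : ℝ) := by exact_mod_cast hδ
  have hc0 : 0 < c := Real.rpow_pos_of_pos hδR _
  have hδH : (0 : ℝ) < (δ : ℝ) ^ H := Real.rpow_pos_of_pos hδR _
  have hmul : ∀ x : ℝ, (δ : ℝ) ^ H * x ≤ 1 ↔ x ≤ c := by
    intro x
    rw [hc_def, Real.rpow_neg hδR.le, ← one_div, mul_comm, ← le_div_iff₀ hδH]
  -- the core sets
  set A : Set Ω := {ω | ∀ k : ℕ, 1 ≤ k → k ≤ N → Z ω (k : ℝ≥0) < 0} with hA_def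
  set B : Set Ω := {ω | ∃ t : ℝ≥0, 0 < t ∧ t ≤ 1 ∧ c < Z ω t} with hB_def
  set C : Set Ω := {ω | ∀ t : ℝ≥0, t ≤ (N : ℝ≥0) * δ → Z ω t ≤ 1} with hC_def
  set C' : Set Ω := {ω | ∀ s : ℝ≥0, s ≤ (N : ℝ≥0) → Z ω s ≤ c} with hC'_def
  set Bq : ℕ → Set Ω := fun k =>
    {ω | ∃ q : ℚ, 0 < (q : ℝ) ∧ (q : ℝ) ≤ 1 ∧
      c < Z ω (Real.toNNReal q + (k : ℝ≥0)) - Z ω (k : ℝ≥0)} with hBq_def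
  -- Step A : ℙ C' = ℙ C
  have stepA : ℙ C' = ℙ C := by
    set S : Set (ℝ≥0 → ℝ) :=
      {g | ∀ q : ℚ, 0 ≤ (q : ℝ) → (q : ℝ) ≤ (N : ℝ) → g (Real.toNNReal q) ≤ 1} with hS_def
    have hS : MeasurableSet S := by
      have hrw : S = ⋂ q : ℚ,
          {g : ℝ≥0 → ℝ | 0 ≤ (q : ℝ) → (q : ℝ) ≤ (N : ℝ) → g (Real.toNNReal q) ≤ 1} := by
        ext g; simp [hS_def, Set.mem_iInter]
      rw [hrw]
      refine MeasurableSet.iInter fun q => ?_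
      by_cases h1 : (0 : ℝ) ≤ (q : ℝ)
      · by_cases h2 : (q : ℝ) ≤ (N : ℝ)
        · simp only [h1, h2, forall_true_left]
          exact measurableSet_le (measurable_pi_apply _) measurable_const
        · simp [h2]
      · simp [h1]
    have hf₁ : Measurable fun ω => fun t => Z ω (δ * t) :=
      measurable_pi_lambda _ fun t => hmeas (δ * t)
    have hf₂ : Measurable fun ω => fun t => (δ : ℝ) ^ H * Z ω t :=
      measurable_pi_lambda _ fun t => (hmeas t).const_mul _
    have e1 : ℙ ((fun ω => fun t => Z ω (δ * t)) ⁻¹' S)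
        = ℙ ((fun ω => fun t => (δ : ℝ) ^ H * Z ω t) ⁻¹' S) := by
      rw [← Measure.map_apply hf₁ hS, ← Measure.map_apply hf₂ hS, hss δ hδ]
    have hpre₁ : (fun ω => fun t => Z ω (δ * t)) ⁻¹' S = C := by
      ext ω
      simp only [Set.mem_preimage, hS_def, Set.mem_setOf_eq, hC_def]
      constructor
      · intro h t ht
        have hyp : ∀ q : ℚ, 0 ≤ (q : ℝ) → (q : ℝ) ≤ ((N : ℝ≥0) : ℝ) →
            (fun u : ℝ≥0 => Z ω (δ * u)) (Real.toNNReal q) ≤ 1 := by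
          intro q hq0 hqN
          exact h q hq0 (by simpa using hqN)
        have key := cont_le_of_rat (f := fun u : ℝ≥0 => Z ω (δ * u))
          ((hcont ω).comp (continuous_const.mul continuous_id)) hyp (t / δ)
          ((div_le_iff₀ hδ).2 ht)
        simpa [mul_div_cancel₀ _ hδ.ne'] using key
      · intro h q hq0 hqN
        apply h
        rw [mul_comm]
        calc Real.toNNReal q * δ ≤ (N : ℝ≥0) * δ := by
              gcongr
              exact Real.toNNReal_le_iff_le_coe.2 (by simpa using hqN)
          _ = (N : ℝ≥0) * δ := rfl
    have hpre₂ : (fun ω => fun t => (δ : ℝ) ^ H * Z ω t) ⁻¹' S = C' := by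
      ext ω
      simp only [Set.mem_preimage, hS_def, Set.mem_setOf_eq, hC'_def]
      constructor
      · intro h
        refine cont_le_of_rat (hcont ω) ?_
        intro q hq0 hqN
        exact (hmul _).1 (h q hq0 (by simpa using hqN))
      · intro h q hq0 hqN
        refine (hmul _).2 (h (Real.toNNReal q) ?_)
        exact Real.toNNReal_le_iff_le_coe.2 (by simpa using hqN)
    rw [← hpre₁, ← hpre₂]
    exact e1.symm
  -- Step B : ∀ k, ℙ (Bq k) = ℙ B
  have stepB : ∀ k : ℕ, ℙ (Bq k) = ℙ B := by
    intro k
    set T : Set (ℝ≥0 → ℝ) :=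
      {g | ∃ q : ℚ, 0 < (q : ℝ) ∧ (q : ℝ) ≤ 1 ∧ c < g (Real.toNNReal q)} with hT_def
    have hT : MeasurableSet T := by
      have hrw : T = ⋃ q : ℚ,
          {g : ℝ≥0 → ℝ | 0 < (q : ℝ) ∧ (q : ℝ) ≤ 1 ∧ c < g (Real.toNNReal q)} := by
        ext g; simp [hT_def]
      rw [hrw]
      refine MeasurableSet.iUnion fun q => ?_
      by_cases h1 : 0 < (q : ℝ)
      · by_cases h2 : (q : ℝ) ≤ 1
        · simp only [h1, h2, true_and]
          exact measurableSet_lt measurable_const (measurable_pi_apply _)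
        · simp [h2]
      · simp [h1]
    have hg₁ : Measurable fun ω => fun t => Z ω (t + (k : ℝ≥0)) - Z ω (k : ℝ≥0) :=
      measurable_pi_lambda _ fun t => (hmeas _).sub (hmeas _)
    have hg₂ : Measurable fun ω => fun t : ℝ≥0 => Z ω t :=
      measurable_pi_lambda _ fun t => hmeas t
    have e1 : ℙ ((fun ω => fun t => Z ω (t + (k : ℝ≥0)) - Z ω (k : ℝ≥0)) ⁻¹' T)
        = ℙ ((fun ω => fun t : ℝ≥0 => Z ω t) ⁻¹' T) := by
      rw [← Measure.map_apply hg₁ hT, ← Measure.map_apply hg₂ hT, hstat (k : ℝ≥0)]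
    have hpre₁ : (fun ω => fun t => Z ω (t + (k : ℝ≥0)) - Z ω (k : ℝ≥0)) ⁻¹' T = Bq k := rfl
    have hpre₂ : (fun ω => fun t : ℝ≥0 => Z ω t) ⁻¹' T = B := by
      ext ω
      simp only [Set.mem_preimage, hT_def, Set.mem_setOf_eq, hB_def]
      constructor
      · rintro ⟨q, hq0, hq1, hqc⟩
        exact ⟨Real.toNNReal q, Real.toNNReal_pos.2 hq0,
          Real.toNNReal_le_iff_le_coe.2 (by simpa using hq1), hqc⟩
      · rintro ⟨t, ht0, ht1, htc⟩
        obtain ⟨q, hq0, hqt, hqc⟩ := key_aux (hcont ω) ht0 htc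
        have : (t : ℝ) ≤ 1 := by exact_mod_cast ht1
        exact ⟨q, hq0, hqt.trans this, hqc⟩
    rw [← hpre₁, ← hpre₂]
    exact e1
  -- Step C : inclusion
  have stepC : A ⊆ C' ∪ ⋃ k ∈ Finset.range N, Bq k := by
    intro ω hω
    by_cases hBk : ω ∈ ⋃ k ∈ Finset.range N, Bq k
    · exact Or.inr hBk
    · left
      simp only [Set.mem_iUnion, not_exists] at hBk
      -- continuous upgrade of ¬Bq k
      have hinc : ∀ k : ℕ, k < N → ∀ t : ℝ≥0, t ≤ 1 →
          Z ω (t + (k : ℝ≥0)) - Z ω (k : ℝ≥0) ≤ c := by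
        intro k hk
        have hfc : Continuous fun u : ℝ≥0 => Z ω (u + (k : ℝ≥0)) - Z ω (k : ℝ≥0) :=
          ((hcont ω).comp (continuous_id.add continuous_const)).sub continuous_const
        refine cont_le_of_rat hfc ?_
        intro q hq0 hq1
        rcases eq_or_lt_of_le hq0 with h0 | h0
        · simp [← h0, hZ0, hc0.le]
        · by_contra hcc
          push_neg at hcc
          exact hBk k (Finset.mem_range.2 hk) ⟨q, h0, by simpa using hq1, hcc⟩
      -- show ω ∈ C'
      intro s hs
      rcases eq_or_lt_of_le (show (0 : ℝ≥0) ≤ s from zero_le) with h0 | h0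
      · rw [← h0, hZ0]; exact hc0.le
      · set k : ℕ := ⌈s⌉₊ - 1 with hk_def
        have hceil1 : 1 ≤ ⌈s⌉₊ := Nat.one_le_ceil_iff.2 h0
        have hksucc : k + 1 = ⌈s⌉₊ := Nat.succ_pred_eq_of_pos hceil1
        have hk_lt : (k : ℝ≥0) < s := Nat.lt_ceil.1 (by omega)
        have hs_le : s ≤ ((k : ℝ≥0) + 1) := by
          have := Nat.le_ceil s
          rw [← hksucc] at this
          exact_mod_cast this
        have hkN : k < N := by
          have : ⌈s⌉₊ ≤ N := Nat.ceil_le.2 (by exact_mod_cast hs)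
          omega
        set t : ℝ≥0 := s - (k : ℝ≥0) with ht_def
        have ht1 : t ≤ 1 := tsub_le_iff_right.2 (by rwa [add_comm])
        have ht_add : t + (k : ℝ≥0) = s := tsub_add_cancel_of_le hk_lt.le
        have hZk : Z ω (k : ℝ≥0) ≤ 0 := by
          rcases Nat.eq_zero_or_pos k with hk0 | hk0
          · simp [hk0, hZ0]
          · exact (hω k hk0 hkN.le).le
        have := hinc k hkN t ht1
        rw [ht_add] at this
        linarith
  -- counting
  have count : ℙ A ≤ ℙ C' + (N : ℝ≥0∞) * ℙ B := by
    calc ℙ A ≤ ℙ (C' ∪ ⋃ k ∈ Finset.range N, Bq k) := measure_mono stepC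
      _ ≤ ℙ C' + ℙ (⋃ k ∈ Finset.range N, Bq k) := measure_union_le _ _
      _ ≤ ℙ C' + ∑ k ∈ Finset.range N, ℙ (Bq k) := by
          gcongr
          exact measure_biUnion_finset_le _ _
      _ = ℙ C' + (N : ℝ≥0∞) * ℙ B := by
          congr 1
          simp [stepB, Finset.sum_const, Finset.card_range]
  rw [tsub_le_iff_right, ← stepA]
  exact count
end

section
/- Let γ be the standard Gaussian measure on ℝ and let f : ℝ → ℝ be a convex function with ∫ f(x)² dγ(x) < ∞. If ∫ f(x) dγ(x) = 0, ∫ x f(x) dγ(x) = 0, and ∫ f(x)(x² − 1) dγ(x) = 0, then f(x) = 0 for all x ∈ ℝ. Equivalently, every nonzero convex function in L²(ℝ, γ) has Hermite rank at most 2. -/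
open MeasureTheory ProbabilityTheory Real Set

lemma integrable_pow_gaussianReal (n : ℕ) :
    Integrable (fun x : ℝ => x ^ n) (gaussianReal 0 1) := by
  rw [gaussianReal_of_var_ne_zero 0 one_ne_zero,
    integrable_withDensity_iff (measurable_gaussianPDF 0 1)
      (ae_of_all _ fun x => ENNReal.ofReal_lt_top)]
  have key : Integrable (fun x : ℝ => x ^ n * Real.exp (-(1/2 : ℝ) * x ^ 2)) := by
    have := integrable_rpow_mul_exp_neg_mul_sq (b := 1/2) (by norm_num)
      (s := (n : ℝ)) (lt_of_lt_of_le (by norm_num) (Nat.cast_nonneg n))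
    simpa [Real.rpow_natCast] using this
  refine (key.const_mul ((Real.sqrt (2 * π))⁻¹)).congr (ae_of_all _ fun x => ?_)
  dsimp only
  rw [show (gaussianPDF 0 1 x).toReal = gaussianPDFReal 0 1 x from
    ENNReal.toReal_ofReal (gaussianPDFReal_nonneg 0 1 x), gaussianPDFReal]
  have h : -(x - 0) ^ 2 / (2 * ((1:NNReal):ℝ)) = -(1/2 : ℝ) * x ^ 2 := by
    norm_num; ring
  rw [h]
  norm_num
  ring

/-- A convex function in `L²` of the standard Gaussian measure `γ` that is orthogonal to
the first three Hermite polynomials `h₀(x) = 1`, `h₁(x) = x`, `h₂(x) = x² - 1` vanishes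
identically. Equivalently, every nonzero convex function in `L²(ℝ, γ)` has Hermite rank
at most `2`. -/
theorem convex_hermite_rank_le_two
    (f : ℝ → ℝ) (hconv : ConvexOn ℝ Set.univ f)
    (hL2 : Integrable (fun x => f x ^ 2) (gaussianReal 0 1))
    (h0 : ∫ x, f x ∂(gaussianReal 0 1) = 0)
    (h1 : ∫ x, x * f x ∂(gaussianReal 0 1) = 0)
    (h2 : ∫ x, f x * (x ^ 2 - 1) ∂(gaussianReal 0 1) = 0) :
    ∀ x, f x = 0 := by
  set γ := gaussianReal 0 1 with hγdef
  have hcont : Continuous f := by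
    have h := hconv.continuousOn isOpen_univ
    exact continuousOn_univ.mp h
  have hmeas : AEStronglyMeasurable f γ := hcont.aestronglyMeasurable
  -- integrability of f * g for g with integrable square
  have hmul : ∀ g : ℝ → ℝ, Continuous g → Integrable (fun x => g x ^ 2) γ →
      Integrable (fun x => f x * g x) γ := by
    intro g hg hg2
    refine Integrable.mono' ((hL2.add hg2).div_const 2)
      (hcont.mul hg).aestronglyMeasurable (ae_of_all _ fun x => ?_)
    rw [Real.norm_eq_abs, abs_mul]
    show |f x| * |g x| ≤ (f x ^ 2 + g x ^ 2) / 2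
    nlinarith [sq_nonneg (|f x| - |g x|), sq_abs (f x), sq_abs (g x)]
  have hI0 : Integrable f γ := by
    have := hmul (fun _ => 1) continuous_const (by simp)
    simpa using this
  have hI1 : Integrable (fun x => x * f x) γ := by
    have := hmul id continuous_id (by simpa using integrable_pow_gaussianReal 2)
    simpa [mul_comm] using this
  have hI2 : Integrable (fun x => f x * (x ^ 2 - 1)) γ := by
    refine hmul (fun x => x ^ 2 - 1) (by continuity) ?_
    have : Integrable (fun x : ℝ => x ^ 4 - 2 * x ^ 2 + 1) γ :=
      ((integrable_pow_gaussianReal 4).sub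
        ((integrable_pow_gaussianReal 2).const_mul 2)).add (integrable_const 1)
    refine this.congr (ae_of_all _ fun x => ?_)
    ring
  have hquadI : ∀ p q r : ℝ, Integrable (fun x => f x * (p * x ^ 2 + q * x + r)) γ := by
    intro p q r
    have heq : (fun x => f x * (p * x ^ 2 + q * x + r)) =
        fun x => p * (f x * (x ^ 2 - 1)) + q * (x * f x) + (p + r) * f x := by
      funext x; ring
    rw [heq]
    exact ((hI2.const_mul p).add (hI1.const_mul q)).add (hI0.const_mul (p + r))
  have hquad : ∀ p q r : ℝ, ∫ x, f x * (p * x ^ 2 + q * x + r) ∂γ = 0 := by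
    intro p q r
    have heq : (fun x => f x * (p * x ^ 2 + q * x + r)) =
        fun x => p * (f x * (x ^ 2 - 1)) + q * (x * f x) + (p + r) * f x := by
      funext x; ring
    have e1 : Integrable (fun x => p * (f x * (x ^ 2 - 1))) γ := hI2.const_mul p
    have e2 : Integrable (fun x => q * (x * f x)) γ := hI1.const_mul q
    have e3 : Integrable (fun x => (p + r) * f x) γ := hI0.const_mul (p + r)
    have e12 : Integrable (fun x => p * (f x * (x ^ 2 - 1)) + q * (x * f x)) γ := e1.add e2
    rw [heq, integral_add e12 e3, integral_add e1 e2, integral_const_mul,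
      integral_const_mul, integral_const_mul, h0, h1, h2]
    ring
  have hne : ∀ a : ℝ, ∀ᵐ x ∂(volume : Measure ℝ), x ≠ a := by
    intro a
    rw [ae_iff, show {x : ℝ | ¬ x ≠ a} = {a} by ext y; simp]
    exact measure_singleton a
  -- the final step
  have finish : ∀ p q r : ℝ, (∀ x, f x * (p * x ^ 2 + q * x + r) ≤ 0) →
      (∀ᵐ x ∂(volume : Measure ℝ), p * x ^ 2 + q * x + r ≠ 0) → ∀ x, f x = 0 := by
    intro p q r hsign hQvol
    set Q : ℝ → ℝ := fun x => p * x ^ 2 + q * x + r with hQdef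
    have hzero : (fun x => -(f x * Q x)) =ᵐ[γ] 0 := by
      refine (integral_eq_zero_iff_of_nonneg_ae
        (ae_of_all _ fun x => neg_nonneg.mpr (hsign x)) (hquadI p q r).neg).mp ?_
      rw [integral_neg, hquad p q r, neg_zero]
    have hQγ : ∀ᵐ x ∂γ, Q x ≠ 0 :=
      ((gaussianReal_absolutelyContinuous 0 one_ne_zero).ae_le) hQvol
    have hfγ : f =ᵐ[γ] 0 := by
      filter_upwards [hzero, hQγ] with x hx hq
      have : f x * Q x = 0 := by simpa using hx
      rcases mul_eq_zero.mp this with h | h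
      · simpa using h
      · exact absurd h hq
    have hfvol : f =ᵐ[volume] 0 :=
      ((gaussianReal_absolutelyContinuous' 0 one_ne_zero).ae_le) hfγ
    have : f = 0 := (Continuous.ae_eq_iff_eq volume hcont continuous_const).mp hfvol
    exact fun x => congrFun this x
  by_cases hS : ∃ x, f x < 0
  · obtain ⟨x₀, hx₀⟩ := hS
    set S : Set ℝ := {x | f x < 0} with hSdef
    have hSne : S.Nonempty := ⟨x₀, hx₀⟩
    have hSconv : Convex ℝ S := by
      have := hconv.convex_lt 0
      simpa [Set.sep_univ] using this
    have hOrd := hSconv.ordConnected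
    have hmem : ∀ x : ℝ, (∃ s ∈ S, s < x) → (∃ t ∈ S, x < t) → f x < 0 := by
      rintro x ⟨s, hs, hsx⟩ ⟨t, ht, hxt⟩
      exact hOrd.out hs ht ⟨hsx.le, hxt.le⟩
    by_cases hA : BddBelow S
    · by_cases hB : BddAbove S
      · set a := sInf S with ha
        set b := sSup S with hb
        have hab : a ≤ b := csInf_le_csSup hSne hA hB
        refine finish (-1) (a + b) (-(a * b)) (fun x => ?_) ?_
        · rcases lt_trichotomy x a with hxa | hxa | hxa
          · have hfx : 0 ≤ f x := not_lt.mp fun hx => absurd (csInf_le hA hx) (not_le.mpr hxa)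
            nlinarith [mul_nonneg hfx (mul_pos (sub_pos.mpr hxa)
              (sub_pos.mpr (hxa.trans_le hab))).le]
          · have hz : (-1 : ℝ) * x ^ 2 + (a + b) * x + -(a * b) = 0 := by rw [hxa]; ring
            rw [hz, mul_zero]
          · rcases lt_trichotomy x b with hxb | hxb | hxb
            · have hfx : f x < 0 := hmem x ((csInf_lt_iff hA hSne).mp hxa)
                ((lt_csSup_iff hB hSne).mp hxb)
              nlinarith [mul_nonneg (neg_nonneg.mpr hfx.le)
                (mul_pos (sub_pos.mpr hxa) (sub_pos.mpr hxb)).le]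
            · have hz : (-1 : ℝ) * x ^ 2 + (a + b) * x + -(a * b) = 0 := by rw [hxb]; ring
              rw [hz, mul_zero]
            · have hfx : 0 ≤ f x := not_lt.mp fun hx => absurd (le_csSup hB hx) (not_le.mpr hxb)
              nlinarith [mul_nonneg hfx (mul_pos (sub_pos.mpr (hab.trans_lt hxb))
                (sub_pos.mpr hxb)).le]
        · filter_upwards [hne a, hne b] with x hxa hxb hQ0
          have : (x - a) * (x - b) = 0 := by nlinarith [hQ0]
          rcases mul_eq_zero.mp this with h | h
          · exact hxa (sub_eq_zero.mp h)
          · exact hxb (sub_eq_zero.mp h)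
      · set a := sInf S with ha
        refine finish 0 1 (-a) (fun x => ?_) ?_
        · rcases lt_trichotomy x a with hxa | hxa | hxa
          · have hfx : 0 ≤ f x := not_lt.mp fun hx => absurd (csInf_le hA hx) (not_le.mpr hxa)
            nlinarith
          · have hz : (0 : ℝ) * x ^ 2 + 1 * x + -a = 0 := by rw [hxa]; ring
            rw [hz, mul_zero]
          · have hfx : f x < 0 := hmem x ((csInf_lt_iff hA hSne).mp hxa)
              (not_bddAbove_iff.mp hB x)
            nlinarith [mul_nonneg (neg_nonneg.mpr hfx.le) (sub_pos.mpr hxa).le]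
        · filter_upwards [hne a] with x hxa hQ0
          exact hxa (by linarith)
    · by_cases hB : BddAbove S
      · set b := sSup S with hb
        refine finish 0 (-1) b (fun x => ?_) ?_
        · rcases lt_trichotomy x b with hxb | hxb | hxb
          · have hfx : f x < 0 := hmem x (not_bddBelow_iff.mp hA x)
              ((lt_csSup_iff hB hSne).mp hxb)
            nlinarith [mul_nonneg (neg_nonneg.mpr hfx.le) (sub_pos.mpr hxb).le]
          · have hz : (0 : ℝ) * x ^ 2 + (-1) * x + b = 0 := by rw [hxb]; ring
            rw [hz, mul_zero]
          · have hfx : 0 ≤ f x := not_lt.mp fun hx => absurd (le_csSup hB hx) (not_le.mpr hxb)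
            nlinarith
        · filter_upwards [hne b] with x hxb hQ0
          exact hxb (by linarith)
      · refine finish 0 0 1 (fun x => ?_) ?_
        · have hfx : f x < 0 := hmem x (not_bddBelow_iff.mp hA x) (not_bddAbove_iff.mp hB x)
          nlinarith
        · exact ae_of_all _ fun x => by norm_num
  · push_neg at hS
    refine finish 0 0 (-1) (fun x => ?_) ?_
    · nlinarith [hS x]
    · exact ae_of_all _ fun x => by norm_num
end

section
/- Let γ be the standard Gaussian measure on ℝ and let f : ℝ → ℝ be a convex function with ∫ f(x)² dγ(x) < ∞. If ∫ f(x)(x² − 1) dγ(x) = 0, then f is affine: there exist a, b ∈ ℝ with f(x) = a x + b for all x ∈ ℝ. -/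
open MeasureTheory ProbabilityTheory
open Real Filter

lemma aux_sq_le_exp {t : ℝ} (ht : 0 ≤ t) : t ^ 2 ≤ 4 * Real.exp t := by
  have h1 : t / 2 + 1 ≤ Real.exp (t / 2) := Real.add_one_le_exp _
  have h2 : (t / 2 + 1) * (t / 2 + 1) ≤ Real.exp (t / 2) * Real.exp (t / 2) :=
    mul_self_le_mul_self (by linarith) h1
  rw [← Real.exp_add] at h2
  rw [show t / 2 + t / 2 = t by ring] at h2
  nlinarith

lemma aux_le_exp {t : ℝ} (ht : 0 ≤ t) : t ≤ Real.exp t := by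
  nlinarith [Real.add_one_le_exp t]

lemma aux_int_exp : Integrable (fun x : ℝ => Real.exp (-(1/2) * x ^ 2)) := by
  exact integrable_exp_neg_mul_sq (by norm_num)

lemma aux_int_x2exp : Integrable (fun x : ℝ => x ^ 2 * Real.exp (-(1/2) * x ^ 2)) := by
  apply Integrable.mono' ((integrable_exp_neg_mul_sq (show (0:ℝ) < 1/4 by norm_num)).const_mul 4)
  · exact (Continuous.mul (by continuity) (by continuity)).aestronglyMeasurable
  · refine Filter.Eventually.of_forall fun x => ?_
    have h1 : x ^ 2 ≤ 4 * Real.exp ((1/4) * x ^ 2) := by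
      nlinarith [aux_le_exp (show (0:ℝ) ≤ (1/4) * x ^ 2 by positivity)]
    have h2 : Real.exp (-(1/2) * x^2) * Real.exp ((1/4) * x ^2) = Real.exp (-(1/4) * x^2) := by
      rw [← Real.exp_add]; ring_nf
    have h3 := Real.exp_pos (-(1/2) * x ^ 2)
    have h4 := Real.exp_pos ((1/4) * x ^ 2)
    rw [Real.norm_eq_abs, abs_of_nonneg (by positivity)]
    calc x ^ 2 * Real.exp (-(1/2) * x ^ 2) ≤ (4 * Real.exp ((1/4) * x^2)) * Real.exp (-(1/2) * x ^ 2) := by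
          nlinarith
      _ = 4 * Real.exp (-(1/4) * x ^ 2) := by rw [mul_assoc, mul_comm (Real.exp _), h2]

lemma aux_int_x4exp : Integrable (fun x : ℝ => x ^ 4 * Real.exp (-(1/2) * x ^ 2)) := by
  apply Integrable.mono' ((integrable_exp_neg_mul_sq (show (0:ℝ) < 1/4 by norm_num)).const_mul 64)
  · exact (Continuous.mul (by continuity) (by continuity)).aestronglyMeasurable
  · refine Filter.Eventually.of_forall fun x => ?_
    have h1 : ((1/4) * x ^ 2) ^ 2 ≤ 4 * Real.exp ((1/4) * x ^ 2) :=
      aux_sq_le_exp (by positivity)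
    have h2 : Real.exp (-(1/2) * x^2) * Real.exp ((1/4) * x ^2) = Real.exp (-(1/4) * x^2) := by
      rw [← Real.exp_add]; ring_nf
    have h3 := Real.exp_pos (-(1/2) * x ^ 2)
    rw [Real.norm_eq_abs, abs_of_nonneg (by positivity)]
    calc x ^ 4 * Real.exp (-(1/2) * x ^ 2) ≤ (64 * Real.exp ((1/4) * x^2)) * Real.exp (-(1/2) * x ^ 2) := by
          nlinarith
      _ = 64 * Real.exp (-(1/4) * x ^ 2) := by rw [mul_assoc, mul_comm (Real.exp _), h2]

lemma aux_hasDeriv (x : ℝ) :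
    HasDerivAt (fun x : ℝ => x * Real.exp (-(1/2) * x ^ 2))
      ((1 - x ^ 2) * Real.exp (-(1/2) * x ^ 2)) x := by
  have h1 : HasDerivAt (fun x : ℝ => -(1/2) * x ^ 2) (-(1/2) * (2 * x)) x := by
    simpa using ((hasDerivAt_pow 2 x).const_mul (-(1/2) : ℝ))
  have h2 := h1.exp
  have h3 := (hasDerivAt_id' x).mul h2
  refine h3.congr_deriv ?_
  ring

lemma aux_tendsto_top :
    Tendsto (fun x : ℝ => x * Real.exp (-(1/2) * x ^ 2)) atTop (nhds 0) := by
  have h := rpow_mul_exp_neg_mul_sq_isLittleO_exp_neg (show (0:ℝ) < 1/2 by norm_num) 1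
  have h2 : Tendsto (fun x : ℝ => Real.exp (-(1/2) * x)) atTop (nhds 0) := by
    apply Real.tendsto_exp_atBot.comp
    apply Tendsto.const_mul_atTop_of_neg (by norm_num) tendsto_id |>.mono_right le_rfl
  have := h.trans_tendsto h2
  simpa [Real.rpow_one] using this

lemma aux_tendsto_bot :
    Tendsto (fun x : ℝ => x * Real.exp (-(1/2) * x ^ 2)) atBot (nhds 0) := by
  have h := (aux_tendsto_top.comp tendsto_neg_atBot_atTop).neg
  rw [neg_zero] at h
  refine h.congr fun x => ?_
  simp only [Function.comp, neg_sq, neg_mul, neg_neg]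

lemma aux_integral_one_sub_sq :
    ∫ x : ℝ, (1 - x ^ 2) * Real.exp (-(1/2) * x ^ 2) = 0 := by
  have hint : Integrable (fun x : ℝ => (1 - x ^ 2) * Real.exp (-(1/2) * x ^ 2)) := by
    have := aux_int_exp.sub aux_int_x2exp
    refine this.congr (Filter.Eventually.of_forall fun x => ?_)
    simp only [Pi.sub_apply]
    ring
  have := integral_of_hasDerivAt_of_tendsto aux_hasDeriv hint aux_tendsto_bot aux_tendsto_top
  simpa using this

lemma aux_integral_sq_eq :
    ∫ x : ℝ, x ^ 2 * Real.exp (-(1/2) * x ^ 2) = ∫ x : ℝ, Real.exp (-(1/2) * x ^ 2) := by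
  have h := aux_integral_one_sub_sq
  rw [show (fun x : ℝ => (1 - x ^ 2) * Real.exp (-(1/2) * x ^ 2))
      = fun x : ℝ => Real.exp (-(1/2) * x ^ 2) - x ^ 2 * Real.exp (-(1/2) * x ^ 2) by
    funext x; ring] at h
  rw [integral_sub aux_int_exp aux_int_x2exp] at h
  linarith

noncomputable def gpdf : ℝ → ℝ := gaussianPDFReal 0 1

lemma gpdf_eq (x : ℝ) : gpdf x = (Real.sqrt (2 * Real.pi))⁻¹ * Real.exp (-(1/2) * x ^ 2) := by
  simp only [gpdf, gaussianPDFReal, NNReal.coe_one, mul_one, sub_zero]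
  congr 1
  ring

lemma gpdf_pos (x : ℝ) : 0 < gpdf x := gaussianPDFReal_pos 0 1 x one_ne_zero

lemma gamma_eq : gaussianReal 0 1 = volume.withDensity (fun x => ENNReal.ofReal (gpdf x)) := by
  rw [gaussianReal_of_var_ne_zero 0 one_ne_zero]
  rfl

lemma aux_integrable_iff {F : ℝ → ℝ} :
    Integrable F (gaussianReal 0 1) ↔ Integrable (fun x => F x * gpdf x) volume := by
  rw [gamma_eq, integrable_withDensity_iff]
  · constructor
    · intro h
      refine h.congr (Filter.Eventually.of_forall fun x => ?_)
      simp [ENNReal.toReal_ofReal (gpdf_pos x).le]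
    · intro h
      refine h.congr (Filter.Eventually.of_forall fun x => ?_)
      simp [ENNReal.toReal_ofReal (gpdf_pos x).le]
  · exact (measurable_gaussianPDFReal 0 1).ennreal_ofReal
  · exact Filter.Eventually.of_forall fun x => ENNReal.ofReal_lt_top

lemma aux_integral_eq (F : ℝ → ℝ) :
    ∫ x, F x ∂(gaussianReal 0 1) = ∫ x, F x * gpdf x := by
  rw [gamma_eq]
  have h : (fun x => ENNReal.ofReal (gpdf x)) = (fun x => (((gpdf x).toNNReal : NNReal) : ENNReal)) := rfl
  rw [h, integral_withDensity_eq_integral_smul (f := fun x => (gpdf x).toNNReal)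
    ((measurable_gaussianPDFReal 0 1).real_toNNReal) F]
  congr 1
  funext x
  rw [NNReal.smul_def, Real.coe_toNNReal _ (gpdf_pos x).le, smul_eq_mul, mul_comm]

lemma aux_gint_sq : Integrable (fun x : ℝ => x ^ 2) (gaussianReal 0 1) := by
  rw [aux_integrable_iff]
  have : Integrable (fun x : ℝ => (Real.sqrt (2 * Real.pi))⁻¹ * (x ^ 2 * Real.exp (-(1/2) * x ^ 2))) :=
    aux_int_x2exp.const_mul _
  refine this.congr (Filter.Eventually.of_forall fun x => ?_)
  simp only [gpdf_eq]
  ring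

lemma aux_gint_quad : Integrable (fun x : ℝ => x ^ 4) (gaussianReal 0 1) := by
  rw [aux_integrable_iff]
  have : Integrable (fun x : ℝ => (Real.sqrt (2 * Real.pi))⁻¹ * (x ^ 4 * Real.exp (-(1/2) * x ^ 2))) :=
    aux_int_x4exp.const_mul _
  refine this.congr (Filter.Eventually.of_forall fun x => ?_)
  simp only [gpdf_eq]
  ring

lemma aux_moment_two : ∫ x, x ^ 2 ∂(gaussianReal 0 1) = 1 := by
  rw [aux_integral_eq]
  have h1 : ∫ x : ℝ, x ^ 2 * gpdf x
      = (Real.sqrt (2 * Real.pi))⁻¹ * ∫ x : ℝ, x ^ 2 * Real.exp (-(1/2) * x ^ 2) := by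
    rw [← integral_const_mul]
    congr 1
    funext x
    rw [gpdf_eq]
    ring
  rw [h1, aux_integral_sq_eq]
  have h2 : ∫ x : ℝ, gpdf x = 1 := integral_gaussianPDFReal_eq_one 0 one_ne_zero
  rw [show (fun x : ℝ => gpdf x) = fun x : ℝ => (Real.sqrt (2 * Real.pi))⁻¹ * Real.exp (-(1/2) * x ^ 2) by
    funext x; rw [gpdf_eq]] at h2
  rw [integral_const_mul] at h2
  exact h2

lemma aux_map_neg : Measure.map (fun x : ℝ => -x) (gaussianReal 0 1) = gaussianReal 0 1 := by
  have h := gaussianReal_map_const_mul (μ := 0) (v := 1) (-1)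
  have h1 : (NNReal.mk ((-1 : ℝ) ^ 2) (sq_nonneg _) : NNReal) * 1 = 1 := by
    ext
    norm_num
  rw [h1, mul_zero] at h
  rw [← h]
  congr 1
  funext x
  ring

lemma aux_affine (f : ℝ → ℝ) (hconv : ConvexOn ℝ Set.univ f) (hconc : ConcaveOn ℝ Set.univ f) :
    ∀ x, f x = (f 1 - f 0) * x + f 0 := by
  have heq : ∀ (x y a b : ℝ), 0 ≤ a → 0 ≤ b → a + b = 1 →
      f (a * x + b * y) = a * f x + b * f y := by
    intro x y a b ha hb hab
    have h1 := hconv.2 (Set.mem_univ x) (Set.mem_univ y) ha hb hab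
    have h2 := hconc.2 (Set.mem_univ x) (Set.mem_univ y) ha hb hab
    simp only [smul_eq_mul] at h1 h2
    linarith
  intro x
  rcases lt_trichotomy x 0 with hx | hx | hx
  · have hx1 : (0:ℝ) < 1 - x := by linarith
    have h := heq x 1 (1/(1-x)) ((-x)/(1-x)) (by positivity)
      (div_nonneg (by linarith) (by linarith)) (by field_simp; ring)
    rw [show (1/(1-x)) * x + ((-x)/(1-x)) * 1 = 0 by field_simp; ring] at h
    field_simp at h
    nlinarith [h]
  · rw [hx]; ring
  · rcases le_or_gt x 1 with hx1 | hx1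
    · have h := heq 1 0 x (1-x) (by linarith) (by linarith) (by ring)
      rw [show x * 1 + (1-x) * 0 = x by ring] at h
      linear_combination h
    · have hx0 : x ≠ 0 := by linarith
      have h := heq x 0 (1/x) (1-1/x) (by positivity)
        (by rw [sub_nonneg, div_le_one (by linarith)]; linarith) (by ring)
      rw [show (1/x) * x + (1-1/x) * 0 = 1 by field_simp; ring] at h
      field_simp at h
      nlinarith [h]


/-- A convex function in `L²` of the standard Gaussian measure `γ` that is orthogonal to
the second Hermite polynomial `h₂(x) = x² - 1` is affine. -/
theorem convex_orthogonal_hermite_two_affine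
    (f : ℝ → ℝ) (hconv : ConvexOn ℝ Set.univ f)
    (hL2 : Integrable (fun x => f x ^ 2) (gaussianReal 0 1))
    (h2 : ∫ x, f x * (x ^ 2 - 1) ∂(gaussianReal 0 1) = 0) :
    ∃ a b : ℝ, ∀ x, f x = a * x + b := by

  have hcf : Continuous f := by
    rw [← continuousOn_univ]
    exact hconv.continuousOn isOpen_univ
  set γ := gaussianReal 0 1 with hγ
  -- integrability facts
  have hIf : Integrable f γ := by
    refine Integrable.mono' ((hL2.add (integrable_const 1)).const_mul (1/2))
      hcf.aestronglyMeasurable (Filter.Eventually.of_forall fun x => ?_)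
    rw [Real.norm_eq_abs]
    simp only [Pi.add_apply]
    nlinarith [sq_abs (f x), sq_nonneg (|f x| - 1), abs_nonneg (f x)]
  have hIfx2 : Integrable (fun x => f x * x ^ 2) γ := by
    refine Integrable.mono' ((hL2.add aux_gint_quad).const_mul (1/2))
      (hcf.mul (continuous_pow 2)).aestronglyMeasurable
      (Filter.Eventually.of_forall fun x => ?_)
    rw [Real.norm_eq_abs, abs_mul, abs_of_nonneg (sq_nonneg x)]
    simp only [Pi.add_apply]
    nlinarith [sq_abs (f x), sq_nonneg (|f x| - x ^ 2), abs_nonneg (f x), sq_nonneg x]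
  have hA : Integrable (fun x => f x * (x ^ 2 - 1)) γ := by
    refine (hIfx2.sub hIf).congr (Filter.Eventually.of_forall fun x => ?_)
    simp only [Pi.sub_apply]
    ring
  have mp : MeasurePreserving (fun x : ℝ => -x) γ γ := ⟨measurable_neg, aux_map_neg⟩
  have hAmeas : AEStronglyMeasurable (fun x => f x * (x ^ 2 - 1)) γ :=
    (hcf.mul ((continuous_pow 2).sub continuous_const)).aestronglyMeasurable
  have hB : Integrable (fun x => f (-x) * (x ^ 2 - 1)) γ := by
    have := (mp.integrable_comp hAmeas).mpr hA
    refine this.congr (Filter.Eventually.of_forall fun x => ?_)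
    simp [Function.comp, neg_sq]
  have hBint : ∫ x, f (-x) * (x ^ 2 - 1) ∂γ = 0 := by
    have hmm : AEStronglyMeasurable (fun y => f y * (y ^ 2 - 1))
        (Measure.map (fun x : ℝ => -x) γ) := by
      rw [hγ, aux_map_neg]
      exact hAmeas
    have hmap := integral_map (μ := γ) (φ := fun x : ℝ => -x)
      (f := fun y => f y * (y ^ 2 - 1)) measurable_neg.aemeasurable hmm
    rw [hγ, aux_map_neg] at hmap
    rw [← hγ] at hmap
    have e0 : ∫ x, f (-x) * (x ^ 2 - 1) ∂γ = ∫ x, f (-x) * ((-x) ^ 2 - 1) ∂γ := by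
      congr 1
      funext x
      rw [neg_sq]
    rw [e0, ← hmap]
    exact h2
  -- the even convexification g
  set g : ℝ → ℝ := fun x => f x + f (-x) with hgdef
  have hfneg : ConvexOn ℝ Set.univ (fun x => f (-x)) := by
    refine ⟨convex_univ, fun x _ y _ a b ha hb hab => ?_⟩
    simp only [smul_eq_mul]
    have h := hconv.2 (Set.mem_univ (-x)) (Set.mem_univ (-y)) ha hb hab
    simp only [smul_eq_mul] at h
    rw [show -(a * x + b * y) = a * (-x) + b * (-y) by ring]
    exact h
  have hgconv : ConvexOn ℝ Set.univ g := hconv.add hfneg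
  have heven : ∀ x, g (-x) = g x := by
    intro x
    simp only [hgdef, neg_neg]
    ring
  have hnn : ∀ a b : ℝ, 0 ≤ a → a ≤ b → g a ≤ g b := by
    intro a b ha hab
    rcases eq_or_lt_of_le (ha.trans hab) with hb | hb
    · have hab' : a = b := le_antisymm hab (hb ▸ ha)
      rw [hab']
    · set t := (a + b) / (2 * b) with htdef
      have ht0 : 0 ≤ t := div_nonneg (by linarith) (by linarith)
      have ht1 : t ≤ 1 := by
        rw [div_le_one (by linarith)]
        linarith
      have h := hgconv.2 (Set.mem_univ b) (Set.mem_univ (-b)) ht0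
        (by linarith : (0:ℝ) ≤ 1 - t) (by ring)
      simp only [smul_eq_mul] at h
      rw [show t * b + (1 - t) * (-b) = a by rw [htdef]; field_simp; ring] at h
      rw [heven b] at h
      nlinarith [h]
  have hgmono : ∀ x y : ℝ, |x| ≤ |y| → g x ≤ g y := by
    have habs : ∀ z : ℝ, g |z| = g z := by
      intro z
      rcases abs_cases z with ⟨h1, _⟩ | ⟨h1, _⟩
      · rw [h1]
      · rw [h1, heven]
    intro x y h
    rw [← habs x, ← habs y]
    exact hnn _ _ (abs_nonneg x) h
  set c : ℝ := g 1 with hcdef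
  set h : ℝ → ℝ := fun x => (g x - c) * (x ^ 2 - 1) with hhdef
  have hh0 : ∀ x, 0 ≤ h x := by
    intro x
    simp only [hhdef]
    rcases le_total (|x|) 1 with hx | hx
    · have hg1 : g x ≤ c := hgmono x 1 (by simpa using hx)
      have hs1 : x ^ 2 ≤ 1 := by nlinarith [sq_abs x, abs_nonneg x]
      nlinarith
    · have hg1 : c ≤ g x := hgmono 1 x (by simpa using hx)
      have hs1 : 1 ≤ x ^ 2 := by nlinarith [sq_abs x, abs_nonneg x]
      nlinarith
  have hC : Integrable (fun x => c * (x ^ 2 - 1)) γ :=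
    ((aux_gint_sq.sub (integrable_const 1)).const_mul c)
  have hIh : Integrable h γ := by
    refine ((hA.add hB).sub hC).congr (Filter.Eventually.of_forall fun x => ?_)
    simp only [Pi.add_apply, Pi.sub_apply, hhdef, hgdef]
    ring
  have hinth : ∫ x, h x ∂γ = 0 := by
    have hAB : Integrable (fun x => f x * (x ^ 2 - 1) + f (-x) * (x ^ 2 - 1)) γ := hA.add hB
    have hsum : ∫ x, h x ∂γ = (∫ x, f x * (x ^ 2 - 1) ∂γ) + (∫ x, f (-x) * (x ^ 2 - 1) ∂γ)
        - ∫ x, c * (x ^ 2 - 1) ∂γ := by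
      have e1 : ∫ x, h x ∂γ
          = ∫ x, (f x * (x ^ 2 - 1) + f (-x) * (x ^ 2 - 1)) - c * (x ^ 2 - 1) ∂γ := by
        congr 1
        funext x
        simp only [hhdef, hgdef]
        ring
      rw [e1, integral_sub hAB hC, integral_add hA hB]
    have e2 : ∫ x, (x ^ 2 - 1) ∂γ = 0 := by
      rw [hγ, integral_sub aux_gint_sq (integrable_const 1), aux_moment_two]
      simp
    rw [hsum, h2, hBint, integral_const_mul, e2]
    ring
  have haez : h =ᵐ[γ] 0 :=
    (integral_eq_zero_iff_of_nonneg (fun x => hh0 x) hIh).mp hinth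
  have hvolz : h =ᵐ[volume] 0 :=
    (gaussianReal_absolutelyContinuous' 0 one_ne_zero).ae_eq haez
  have hch : Continuous h := by
    have hcg : Continuous g := hcf.add (hcf.comp continuous_neg)
    exact (hcg.sub continuous_const).mul ((continuous_pow 2).sub continuous_const)
  have hhz : ∀ x, h x = 0 := by
    have := (Continuous.ae_eq_iff_eq volume hch continuous_const).mp hvolz
    intro x
    exact congrFun this x
  have hgc1 : ∀ x, g x = c := by
    intro x
    rcases mul_eq_zero.mp (hhz x) with hz | hz
    · linarith [sub_eq_zero.mp hz]
    · have hx2 : (x - 1) * (x + 1) = 0 := by nlinarith [hz]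
      rcases mul_eq_zero.mp hx2 with hz1 | hz1
      · rw [show x = 1 by linarith]
      · rw [show x = -1 by linarith, heven]
  have hfneg_eq : ∀ z, f (-z) = c - f z := by
    intro z
    have := hgc1 z
    simp only [hgdef] at this
    linarith
  have hconc : ConcaveOn ℝ Set.univ f := by
    refine ⟨convex_univ, fun x _ y _ a b ha hb hab => ?_⟩
    have h1 := hconv.2 (Set.mem_univ (-x)) (Set.mem_univ (-y)) ha hb hab
    simp only [smul_eq_mul] at h1 ⊢
    rw [show a * (-x) + b * (-y) = -(a * x + b * y) by ring, hfneg_eq, hfneg_eq x, hfneg_eq y] at h1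
    have e3 : a * c + b * c = c := by
      rw [← add_mul, hab, one_mul]
    nlinarith [h1, e3]
  exact ⟨f 1 - f 0, f 0, aux_affine f hconv hconc⟩
end
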